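/- Let N be a quantum channel on d×d complex matrices, γ a positive-definite density matrix with N(γ) positive definite, and ρ a density matrix with ρ and N(ρ) positive definite. With eigenbases, quasi-probability P^{μ,ν}_{ij,k'l'}, and complex entropy production σ(μ,i,j,ν,k',l') as above, the first moment of the entropy production under the two-point-measurement quasi-probability equals the quantum relative entropy difference: ∑_{μ,ν,i,j,k',l'} P^{μ,ν}_{ij,k'l'} · σ(μ,i,j,ν,k',l') = S(ρ‖γ) − S(N(ρ)‖N(γ)); in particular the mean imaginary entropy production vanishes, ∑ P^{μ,ν}_{ij,k'l'} · σ_I(μ,i,j,ν,k',l') = 0. -/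

import Mathlib

open Matrix
open scoped ComplexOrder

/-- ⟨v|A|w⟩ -/
noncomputable def braket {d : ℕ} (v : Fin d → ℂ) (A : Matrix (Fin d) (Fin d) ℂ)
    (w : Fin d → ℂ) : ℂ :=
  dotProduct (star v) (A.mulVec w)

/-- |v⟩⟨w| -/
noncomputable def ketbra {d : ℕ} (v w : Fin d → ℂ) : Matrix (Fin d) (Fin d) ℂ :=
  Matrix.vecMulVec v (star w)

/-- A quantum channel in Kraus form: N(X) = ∑ m, K m * X * (K m)ᴴ. -/
noncomputable def krausMap {d : ℕ} {ι : Type} [Fintype ι] (K : ι → Matrix (Fin d) (Fin d) ℂ)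
    (X : Matrix (Fin d) (Fin d) ℂ) : Matrix (Fin d) (Fin d) ℂ :=
  ∑ m, K m * X * (K m)ᴴ

/-- The adjoint map: N†(X) = ∑ m, (K m)ᴴ * X * K m. -/
noncomputable def krausAdj {d : ℕ} {ι : Type} [Fintype ι] (K : ι → Matrix (Fin d) (Fin d) ℂ)
    (X : Matrix (Fin d) (Fin d) ℂ) : Matrix (Fin d) (Fin d) ℂ :=
  ∑ m, (K m)ᴴ * X * K m

/-- An orthonormal family of vectors in ℂ^d. -/
def IsONB {d : ℕ} (e : Fin d → Fin d → ℂ) : Prop :=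
  ∀ i j, dotProduct (star (e i)) (e j) = if i = j then 1 else 0

/-- For A = ∑ i, r i • |e i⟩⟨e i| with `e` orthonormal and `r` positive, the complex
matrix power A^z = exp (z log A) is given by A^z = ∑ i, (r i)^z • |e i⟩⟨e i|. -/
noncomputable def projPow {d : ℕ} (r : Fin d → ℝ) (e : Fin d → Fin d → ℂ) (z : ℂ) :
    Matrix (Fin d) (Fin d) ℂ :=
  ∑ i, ((r i : ℂ) ^ z) • ketbra (e i) (e i)

/-- The two-point-measurement quasi-probability
P^{μ,ν}_{ij,k'l'} = p_μ ⟨φ'_ν| Π_{k'} N(Π_i |ψ_μ⟩⟨ψ_μ| Π_j) Π_{l'} |φ'_ν⟩. -/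
noncomputable def tpmP {d : ℕ} {ι : Type} [Fintype ι] (K : ι → Matrix (Fin d) (Fin d) ℂ)
    (p : Fin d → ℝ) (ψ : Fin d → Fin d → ℂ) (φ : Fin d → Fin d → ℂ)
    (e : Fin d → Fin d → ℂ) (f : Fin d → Fin d → ℂ)
    (μ ν i j k l : Fin d) : ℂ :=
  (p μ : ℂ) *
    braket (φ ν)
      (ketbra (f k) (f k) *
        krausMap K (ketbra (e i) (e i) * ketbra (ψ μ) (ψ μ) * ketbra (e j) (e j)) *
        ketbra (f l) (f l))
      (φ ν)

/-- For A = ∑ i, r i • |e i⟩⟨e i| with `e` orthonormal and `r` positive, the matrix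
logarithm is log A = ∑ i, log (r i) • |e i⟩⟨e i| (spectral decomposition). -/
noncomputable def projLog {d : ℕ} (r : Fin d → ℝ) (e : Fin d → Fin d → ℂ) :
    Matrix (Fin d) (Fin d) ℂ :=
  ∑ i, ((Real.log (r i) : ℂ)) • ketbra (e i) (e i)

/-- The complex forward entropy production σ(μ,i,j,ν,k',l'). -/
noncomputable def entProdFwd {d : ℕ} (p p' r r' : Fin d → ℝ) (μ ν i j k l : Fin d) : ℂ :=
  (((Real.log (p μ) - Real.log (p' ν)) -
      1/2 * Real.log (r i * r j / (r' k * r' l)) : ℝ) : ℂ) -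
    Complex.I / 2 * ((Real.log (r i / r j) - Real.log (r' k / r' l) : ℝ) : ℂ)


namespace QHelper

variable {d : ℕ} {ι : Type} [Fintype ι]

noncomputable def Dm (g : Fin d → ℂ) (v : Fin d → Fin d → ℂ) : Matrix (Fin d) (Fin d) ℂ :=
  ∑ i, g i • ketbra (v i) (v i)

lemma ketbra_mul_ketbra (u v x y : Fin d → ℂ) :
    ketbra u v * ketbra x y = (star v ⬝ᵥ x) • ketbra u y := by
  ext a b
  simp [ketbra, Matrix.mul_apply, Matrix.vecMulVec_apply, dotProduct,
    Finset.sum_mul, Finset.mul_sum]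
  exact Finset.sum_congr rfl fun c _ => by ring

lemma trace_ketbra (u v : Fin d → ℂ) : (ketbra u v).trace = star v ⬝ᵥ u := by
  simp [ketbra, Matrix.trace, Matrix.vecMulVec_apply, dotProduct, Matrix.diag,
    mul_comm]

lemma braket_eq_trace (v : Fin d → ℂ) (M : Matrix (Fin d) (Fin d) ℂ) :
    braket v M v = (M * ketbra v v).trace := by
  simp [braket, ketbra, Matrix.trace, Matrix.mul_apply, Matrix.vecMulVec_apply,
    dotProduct, Matrix.mulVec, Matrix.diag, Finset.mul_sum]
  exact Finset.sum_congr rfl fun a _ => Finset.sum_congr rfl fun c _ => by ring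

lemma sum_ketbra_eq_one {e : Fin d → Fin d → ℂ} (he : IsONB e) :
    ∑ i, ketbra (e i) (e i) = 1 := by
  set U : Matrix (Fin d) (Fin d) ℂ := Matrix.of fun i a => e i a with hU
  have h1 : U * Uᴴ = 1 := by
    ext i j
    have hji := he j i
    simp [dotProduct] at hji
    simp [Matrix.mul_apply, hU, Matrix.one_apply]
    rw [show (∑ x, e i x * (starRingEnd ℂ) (e j x)) = ∑ x, (starRingEnd ℂ) (e j x) * e i x
      from Finset.sum_congr rfl fun _ _ => mul_comm _ _, hji]
    by_cases h : i = j <;> simp [h, eq_comm]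
  have h2 : Uᴴ * U = 1 := mul_eq_one_comm.mp h1
  ext a b
  have h3 := congrArg (starRingEnd ℂ) (congrFun (congrFun h2 a) b)
  simp [Matrix.mul_apply, hU, Matrix.one_apply] at h3
  by_cases h : a = b <;>
    simp [h, ketbra, Matrix.vecMulVec_apply, Matrix.one_apply, Finset.sum_apply] at h3 ⊢ <;>
    simpa [Matrix.sum_apply, Matrix.vecMulVec_apply] using h3

lemma mul_sum_smul_mul (A B : Matrix (Fin d) (Fin d) ℂ) (c : Fin d → ℂ)
    (M : Fin d → Matrix (Fin d) (Fin d) ℂ) :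
    A * (∑ t, c t • M t) * B = ∑ t, c t • (A * M t * B) := by
  rw [Finset.mul_sum, Finset.sum_mul]
  exact Finset.sum_congr rfl fun t _ => by rw [mul_smul_comm, smul_mul_assoc]

lemma krausMap_sum_smul (K : ι → Matrix (Fin d) (Fin d) ℂ) (c : Fin d → ℂ)
    (X : Fin d → Matrix (Fin d) (Fin d) ℂ) :
    krausMap K (∑ t, c t • X t) = ∑ t, c t • krausMap K (X t) := by
  simp only [krausMap, Finset.mul_sum, Finset.sum_mul, mul_smul_comm, smul_mul_assoc,
    Finset.smul_sum]
  exact Finset.sum_comm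

lemma trace_sum_smul (c : Fin d → ℂ) (M : Fin d → Matrix (Fin d) (Fin d) ℂ) :
    (∑ t, c t • M t).trace = ∑ t, c t * (M t).trace := by
  simp [Matrix.trace_sum, smul_eq_mul]

lemma collapse_mid (c : Fin d → ℂ) (M : Fin d → Matrix (Fin d) (Fin d) ℂ)
    (A B : Matrix (Fin d) (Fin d) ℂ) :
    ∑ t, c t * (A * (M t * B)).trace = (A * ((∑ t, c t • M t) * B)).trace := by
  rw [Finset.sum_mul, Finset.mul_sum, Matrix.trace_sum]
  refine (Finset.sum_congr rfl fun t _ => ?_).symm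
  rw [smul_mul_assoc, mul_smul_comm, Matrix.trace_smul, smul_eq_mul]

lemma collapse_last (c : Fin d → ℂ) (M : Fin d → Matrix (Fin d) (Fin d) ℂ)
    (A : Matrix (Fin d) (Fin d) ℂ) :
    ∑ t, c t * (A * M t).trace = (A * (∑ t, c t • M t)).trace := by
  rw [Finset.mul_sum, Matrix.trace_sum]
  refine (Finset.sum_congr rfl fun t _ => ?_).symm
  rw [mul_smul_comm, Matrix.trace_smul, smul_eq_mul]

lemma collapse_kraus (K : ι → Matrix (Fin d) (Fin d) ℂ) (c : Fin d → ℂ)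
    (M : Fin d → Matrix (Fin d) (Fin d) ℂ) (A B C C' : Matrix (Fin d) (Fin d) ℂ) :
    ∑ t, c t * (A * (krausMap K (C * (M t * C')) * B)).trace
      = (A * (krausMap K (C * ((∑ t, c t • M t) * C')) * B)).trace := by
  have h1 : C * ((∑ t, c t • M t) * C') = ∑ t, c t • (C * (M t * C')) := by
    rw [Finset.sum_mul, Finset.mul_sum]
    exact Finset.sum_congr rfl fun t _ => by rw [smul_mul_assoc, mul_smul_comm]
  rw [h1, krausMap_sum_smul, Finset.sum_mul, Finset.mul_sum, Matrix.trace_sum]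
  refine (Finset.sum_congr rfl fun t _ => ?_).symm
  rw [smul_mul_assoc, mul_smul_comm, Matrix.trace_smul, smul_eq_mul]

lemma Dm_one {e : Fin d → Fin d → ℂ} (he : IsONB e) : Dm (fun _ => (1:ℂ)) e = 1 := by
  simp [Dm, sum_ketbra_eq_one he]

lemma Dm_mul_Dm {v : Fin d → Fin d → ℂ} (hv : IsONB v) (g h : Fin d → ℂ) :
    Dm g v * Dm h v = Dm (fun i => g i * h i) v := by
  simp only [Dm, Finset.sum_mul, Finset.mul_sum, smul_mul_assoc, mul_smul_comm,
    ketbra_mul_ketbra, smul_smul]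
  have hv' : ∀ i j, star (v i) ⬝ᵥ v j = if i = j then 1 else 0 := hv
  refine Finset.sum_congr rfl fun i _ => ?_
  simp [hv', apply_ite, ite_smul, mul_ite, ite_mul, Finset.sum_ite_eq, Finset.sum_ite_eq',
    smul_smul, mul_comm]

lemma trace_Dm {v : Fin d → Fin d → ℂ} (hv : IsONB v) (g : Fin d → ℂ) :
    (Dm g v).trace = ∑ i, g i := by
  have hv' : ∀ i j, star (v i) ⬝ᵥ v j = if i = j then 1 else 0 := hv
  simp [Dm, trace_sum_smul, trace_ketbra, hv']

lemma trace_Dm_mul_Dm (g h : Fin d → ℂ) (v w : Fin d → Fin d → ℂ) :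
    (Dm g v * Dm h w).trace
      = ∑ i, ∑ k, g i * h k * ((Complex.normSq (star (v i) ⬝ᵥ w k) : ℝ) : ℂ) := by
  simp only [Dm, Finset.sum_mul, Finset.mul_sum, smul_mul_assoc, mul_smul_comm,
    ketbra_mul_ketbra, smul_smul, Matrix.trace_sum, Matrix.trace_smul, trace_ketbra,
    smul_eq_mul]
  rw [Finset.sum_comm]
  refine Finset.sum_congr rfl fun i _ => Finset.sum_congr rfl fun k _ => ?_
  have hz : (star (w k) ⬝ᵥ v i) = starRingEnd ℂ (star (v i) ⬝ᵥ w k) := by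
    simp [dotProduct, map_sum, mul_comm]
  have hc : (star (v i) ⬝ᵥ w k) * starRingEnd ℂ (star (v i) ⬝ᵥ w k)
      = ((Complex.normSq (star (v i) ⬝ᵥ w k) : ℝ) : ℂ) := Complex.mul_conj _
  rw [hz]
  linear_combination (g i * h k) * hc

lemma trace_krausMap (K : ι → Matrix (Fin d) (Fin d) ℂ)
    (hK : ∑ m, (K m)ᴴ * K m = 1) (X : Matrix (Fin d) (Fin d) ℂ) :
    (krausMap K X).trace = X.trace := by
  simp only [krausMap, Matrix.trace_sum]
  have h1 : ∀ m : ι, (K m * X * (K m)ᴴ).trace = (X * ((K m)ᴴ * K m)).trace := by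
    intro m
    rw [Matrix.trace_mul_cycle, Matrix.trace_mul_comm]
  rw [Finset.sum_congr rfl fun m _ => h1 m, ← Matrix.trace_sum, ← Finset.mul_sum, hK,
    mul_one]

lemma collapse_mid' (c : Fin d → ℂ) (M : Fin d → Matrix (Fin d) (Fin d) ℂ)
    (A B : Matrix (Fin d) (Fin d) ℂ) :
    ∑ t, c t * (A * (M t * B)).trace = (A * ((∑ t, c t • M t) * B)).trace := collapse_mid c M A B

lemma collapse_k (c : Fin d → ℂ) (M : Fin d → Matrix (Fin d) (Fin d) ℂ)
    (N' Q : Matrix (Fin d) (Fin d) ℂ) :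
    ∑ t, c t * ((M t * N') * Q).trace = (((∑ t, c t • M t) * N') * Q).trace := by
  have h : ((∑ t, c t • M t) * N') * Q = ∑ t, c t • ((M t * N') * Q) := by
    simp only [Finset.sum_mul, smul_mul_assoc]
  rw [h, trace_sum_smul]

lemma collapse_j (K : ι → Matrix (Fin d) (Fin d) ℂ) (c : Fin d → ℂ)
    (M : Fin d → Matrix (Fin d) (Fin d) ℂ) (A C Q : Matrix (Fin d) (Fin d) ℂ) :
    ∑ t, c t * ((A * krausMap K (C * M t)) * Q).trace
      = ((A * krausMap K (C * (∑ t, c t • M t))) * Q).trace := by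
  have h : (A * krausMap K (C * (∑ t, c t • M t))) * Q
      = ∑ t, c t • ((A * krausMap K (C * M t)) * Q) := by
    simp only [Finset.mul_sum, mul_smul_comm, krausMap_sum_smul, Finset.sum_mul,
      smul_mul_assoc]
  rw [h, trace_sum_smul]

lemma collapse_i (K : ι → Matrix (Fin d) (Fin d) ℂ) (c : Fin d → ℂ)
    (M : Fin d → Matrix (Fin d) (Fin d) ℂ) (A C C' Q : Matrix (Fin d) (Fin d) ℂ) :
    ∑ t, c t * ((A * krausMap K (M t * C * C')) * Q).trace
      = ((A * krausMap K ((∑ t, c t • M t) * C * C')) * Q).trace := by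
  have h : (A * krausMap K ((∑ t, c t • M t) * C * C')) * Q
      = ∑ t, c t • ((A * krausMap K (M t * C * C')) * Q) := by
    simp only [Finset.mul_sum, mul_smul_comm, krausMap_sum_smul, Finset.sum_mul,
      smul_mul_assoc]
  rw [h, trace_sum_smul]

lemma collapse_nu (c : Fin d → ℂ) (M : Fin d → Matrix (Fin d) (Fin d) ℂ)
    (A B' : Matrix (Fin d) (Fin d) ℂ) :
    ∑ t, c t * (A * (B' * M t)).trace = (A * (B' * (∑ t, c t • M t))).trace := by
  have h : A * (B' * (∑ t, c t • M t)) = ∑ t, c t • (A * (B' * M t)) := by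
    simp only [Finset.mul_sum, mul_smul_comm]
  rw [h, trace_sum_smul]

lemma collapse_mu (K : ι → Matrix (Fin d) (Fin d) ℂ) (c : Fin d → ℂ)
    (M : Fin d → Matrix (Fin d) (Fin d) ℂ) (A C C' Q : Matrix (Fin d) (Fin d) ℂ) :
    ∑ t, c t * ((A * krausMap K (C * M t * C')) * Q).trace
      = ((A * krausMap K (C * (∑ t, c t • M t) * C')) * Q).trace := by
  have h : (A * krausMap K (C * (∑ t, c t • M t) * C')) * Q
      = ∑ t, c t • ((A * krausMap K (C * M t * C')) * Q) := by
    simp only [Finset.mul_sum, Finset.sum_mul, mul_smul_comm, smul_mul_assoc,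
      krausMap_sum_smul]
  rw [h, trace_sum_smul]

lemma master (K : ι → Matrix (Fin d) (Fin d) ℂ) (p : Fin d → ℝ)
    (ψ φ e f : Fin d → Fin d → ℂ) (w x y z a b : Fin d → ℂ) :
    (∑ μ, ∑ ν, ∑ i, ∑ j, ∑ k, ∑ l,
      tpmP K p ψ φ e f μ ν i j k l * (w μ * x ν * y i * z j * a k * b l))
      = (Dm a f * krausMap K (Dm y e * Dm (fun μ => ((p μ : ℂ)) * w μ) ψ * Dm z e) *
          (Dm b f * Dm x φ)).trace := by
  simp only [Dm]
  have Sl : ∀ μ ν i j k,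
      (∑ l, tpmP K p ψ φ e f μ ν i j k l * (w μ * x ν * y i * z j * a k * b l))
        = (w μ * x ν * ((p μ : ℂ)) * y i * z j) * (a k *
            ((ketbra (f k) (f k) *
              krausMap K (ketbra (e i) (e i) * ketbra (ψ μ) (ψ μ) * ketbra (e j) (e j))) *
              ((∑ t, b t • ketbra (f t) (f t)) * ketbra (φ ν) (φ ν))).trace) := by
    intro μ ν i j k
    have h1 : ∀ l, tpmP K p ψ φ e f μ ν i j k l * (w μ * x ν * y i * z j * a k * b l)
        = (w μ * x ν * ((p μ : ℂ)) * y i * z j * a k) * (b l *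
            ((ketbra (f k) (f k) *
              krausMap K (ketbra (e i) (e i) * ketbra (ψ μ) (ψ μ) * ketbra (e j) (e j))) *
              (ketbra (f l) (f l) * ketbra (φ ν) (φ ν))).trace) := by
      intro l
      rw [tpmP, braket_eq_trace,
        mul_assoc (ketbra (f k) (f k) * krausMap K
            (ketbra (e i) (e i) * ketbra (ψ μ) (ψ μ) * ketbra (e j) (e j)))
          (ketbra (f l) (f l)) (ketbra (φ ν) (φ ν))]
      ring
    rw [Finset.sum_congr rfl fun l _ => h1 l, ← Finset.mul_sum, collapse_mid']
    ring
  have Sk : ∀ μ ν i j,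
      (∑ k, (w μ * x ν * ((p μ : ℂ)) * y i * z j) * (a k *
            ((ketbra (f k) (f k) *
              krausMap K (ketbra (e i) (e i) * ketbra (ψ μ) (ψ μ) * ketbra (e j) (e j))) *
              ((∑ t, b t • ketbra (f t) (f t)) * ketbra (φ ν) (φ ν))).trace))
        = (w μ * x ν * ((p μ : ℂ)) * y i) * (z j *
            (((∑ t, a t • ketbra (f t) (f t)) *
              krausMap K (ketbra (e i) (e i) * ketbra (ψ μ) (ψ μ) * ketbra (e j) (e j))) *
              ((∑ t, b t • ketbra (f t) (f t)) * ketbra (φ ν) (φ ν))).trace) := by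
    intro μ ν i j
    rw [← Finset.mul_sum, collapse_k]
    ring
  have Sj : ∀ μ ν i,
      (∑ j, (w μ * x ν * ((p μ : ℂ)) * y i) * (z j *
            (((∑ t, a t • ketbra (f t) (f t)) *
              krausMap K (ketbra (e i) (e i) * ketbra (ψ μ) (ψ μ) * ketbra (e j) (e j))) *
              ((∑ t, b t • ketbra (f t) (f t)) * ketbra (φ ν) (φ ν))).trace))
        = (w μ * x ν * ((p μ : ℂ))) * (y i *
            (((∑ t, a t • ketbra (f t) (f t)) *
              krausMap K (ketbra (e i) (e i) * ketbra (ψ μ) (ψ μ) *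
                (∑ t, z t • ketbra (e t) (e t)))) *
              ((∑ t, b t • ketbra (f t) (f t)) * ketbra (φ ν) (φ ν))).trace) := by
    intro μ ν i
    rw [← Finset.mul_sum, collapse_j]
    ring
  have Si : ∀ μ ν,
      (∑ i, (w μ * x ν * ((p μ : ℂ))) * (y i *
            (((∑ t, a t • ketbra (f t) (f t)) *
              krausMap K (ketbra (e i) (e i) * ketbra (ψ μ) (ψ μ) *
                (∑ t, z t • ketbra (e t) (e t)))) *
              ((∑ t, b t • ketbra (f t) (f t)) * ketbra (φ ν) (φ ν))).trace))
        = (w μ * ((p μ : ℂ))) * (x ν *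
            (((∑ t, a t • ketbra (f t) (f t)) *
              krausMap K ((∑ t, y t • ketbra (e t) (e t)) * ketbra (ψ μ) (ψ μ) *
                (∑ t, z t • ketbra (e t) (e t)))) *
              ((∑ t, b t • ketbra (f t) (f t)) * ketbra (φ ν) (φ ν))).trace) := by
    intro μ ν
    rw [← Finset.mul_sum, collapse_i]
    ring
  have Snu : ∀ μ,
      (∑ ν, (w μ * ((p μ : ℂ))) * (x ν *
            (((∑ t, a t • ketbra (f t) (f t)) *
              krausMap K ((∑ t, y t • ketbra (e t) (e t)) * ketbra (ψ μ) (ψ μ) *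
                (∑ t, z t • ketbra (e t) (e t)))) *
              ((∑ t, b t • ketbra (f t) (f t)) * ketbra (φ ν) (φ ν))).trace))
        = (((p μ : ℂ)) * w μ) *
            (((∑ t, a t • ketbra (f t) (f t)) *
              krausMap K ((∑ t, y t • ketbra (e t) (e t)) * ketbra (ψ μ) (ψ μ) *
                (∑ t, z t • ketbra (e t) (e t)))) *
              ((∑ t, b t • ketbra (f t) (f t)) * (∑ t, x t • ketbra (φ t) (φ t)))).trace := by
    intro μ
    rw [← Finset.mul_sum, collapse_nu]
    ring
  calc (∑ μ, ∑ ν, ∑ i, ∑ j, ∑ k, ∑ l,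
      tpmP K p ψ φ e f μ ν i j k l * (w μ * x ν * y i * z j * a k * b l))
      = ∑ μ, ∑ ν, ∑ i, ∑ j, ∑ k, (w μ * x ν * ((p μ : ℂ)) * y i * z j) * (a k *
            ((ketbra (f k) (f k) *
              krausMap K (ketbra (e i) (e i) * ketbra (ψ μ) (ψ μ) * ketbra (e j) (e j))) *
              ((∑ t, b t • ketbra (f t) (f t)) * ketbra (φ ν) (φ ν))).trace) :=
        Finset.sum_congr rfl fun μ _ => Finset.sum_congr rfl fun ν _ =>
          Finset.sum_congr rfl fun i _ => Finset.sum_congr rfl fun j _ =>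
          Finset.sum_congr rfl fun k _ => Sl μ ν i j k
    _ = ∑ μ, ∑ ν, ∑ i, ∑ j, (w μ * x ν * ((p μ : ℂ)) * y i) * (z j *
            (((∑ t, a t • ketbra (f t) (f t)) *
              krausMap K (ketbra (e i) (e i) * ketbra (ψ μ) (ψ μ) * ketbra (e j) (e j))) *
              ((∑ t, b t • ketbra (f t) (f t)) * ketbra (φ ν) (φ ν))).trace) :=
        Finset.sum_congr rfl fun μ _ => Finset.sum_congr rfl fun ν _ =>
          Finset.sum_congr rfl fun i _ => Finset.sum_congr rfl fun j _ => Sk μ ν i j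
    _ = ∑ μ, ∑ ν, ∑ i, (w μ * x ν * ((p μ : ℂ))) * (y i *
            (((∑ t, a t • ketbra (f t) (f t)) *
              krausMap K (ketbra (e i) (e i) * ketbra (ψ μ) (ψ μ) *
                (∑ t, z t • ketbra (e t) (e t)))) *
              ((∑ t, b t • ketbra (f t) (f t)) * ketbra (φ ν) (φ ν))).trace) :=
        Finset.sum_congr rfl fun μ _ => Finset.sum_congr rfl fun ν _ =>
          Finset.sum_congr rfl fun i _ => Sj μ ν i
    _ = ∑ μ, ∑ ν, (w μ * ((p μ : ℂ))) * (x ν *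
            (((∑ t, a t • ketbra (f t) (f t)) *
              krausMap K ((∑ t, y t • ketbra (e t) (e t)) * ketbra (ψ μ) (ψ μ) *
                (∑ t, z t • ketbra (e t) (e t)))) *
              ((∑ t, b t • ketbra (f t) (f t)) * ketbra (φ ν) (φ ν))).trace) :=
        Finset.sum_congr rfl fun μ _ => Finset.sum_congr rfl fun ν _ => Si μ ν
    _ = ∑ μ, (((p μ : ℂ)) * w μ) *
            (((∑ t, a t • ketbra (f t) (f t)) *
              krausMap K ((∑ t, y t • ketbra (e t) (e t)) * ketbra (ψ μ) (ψ μ) *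
                (∑ t, z t • ketbra (e t) (e t)))) *
              ((∑ t, b t • ketbra (f t) (f t)) * (∑ t, x t • ketbra (φ t) (φ t)))).trace :=
        Finset.sum_congr rfl fun μ _ => Snu μ
    _ = _ := collapse_mu K _ _ _ _ _ _

lemma Dm_smul (c : ℂ) (g : Fin d → ℂ) (v : Fin d → Fin d → ℂ) :
    Dm (fun i => c * g i) v = c • Dm g v := by
  simp [Dm, Finset.smul_sum, smul_smul]

lemma krausMap_smul (K : ι → Matrix (Fin d) (Fin d) ℂ) (c : ℂ)
    (X : Matrix (Fin d) (Fin d) ℂ) :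
    krausMap K (c • X) = c • krausMap K X := by
  simp [krausMap, Finset.smul_sum, smul_mul_assoc, mul_smul_comm]

end QHelper

open QHelper in
/-- the first moment of the entropy production equals the quantum relative
entropy difference S(ρ‖γ) − S(N(ρ)‖N(γ)), and the mean imaginary entropy production
vanishes. -/
theorem mean_entropy_production_eq_relative_entropy_difference
    {d : ℕ} {ι : Type} [Fintype ι] (K : ι → Matrix (Fin d) (Fin d) ℂ)
    (hK : ∑ m, (K m)ᴴ * K m = 1)
    (γ : Matrix (Fin d) (Fin d) ℂ)
    (r : Fin d → ℝ) (e : Fin d → Fin d → ℂ) (hr : ∀ i, 0 < r i) (he : IsONB e)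
    (hrtr : ∑ i, r i = 1)
    (hγ : γ = ∑ i, ((r i : ℂ)) • ketbra (e i) (e i))
    (r' : Fin d → ℝ) (f : Fin d → Fin d → ℂ) (hr' : ∀ k, 0 < r' k) (hf : IsONB f)
    (hNγ : krausMap K γ = ∑ k, ((r' k : ℂ)) • ketbra (f k) (f k))
    (ρ : Matrix (Fin d) (Fin d) ℂ)
    (p : Fin d → ℝ) (ψ : Fin d → Fin d → ℂ) (hp : ∀ μ, 0 < p μ) (hψ : IsONB ψ)
    (hρ : ρ = ∑ μ, ((p μ : ℂ)) • ketbra (ψ μ) (ψ μ))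
    (p' : Fin d → ℝ) (φ : Fin d → Fin d → ℂ) (hp' : ∀ ν, 0 < p' ν) (hφ : IsONB φ)
    (hNρ : krausMap K ρ = ∑ ν, ((p' ν : ℂ)) • ketbra (φ ν) (φ ν)) :
    (∑ μ, ∑ ν, ∑ i, ∑ j, ∑ k, ∑ l,
      tpmP K p ψ φ e f μ ν i j k l * entProdFwd p p' r r' μ ν i j k l) =
      ((((ρ * (projLog p ψ - projLog r e)).trace.re -
          ((krausMap K ρ) * (projLog p' φ - projLog r' f)).trace.re : ℝ)) : ℂ) ∧
    (∑ μ, ∑ ν, ∑ i, ∑ j, ∑ k, ∑ l,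
      tpmP K p ψ φ e f μ ν i j k l *
        (((-(1/2) * (Real.log (r i / r j) - Real.log (r' k / r' l)) : ℝ)) : ℂ)) = 0 := by

  have hN : krausMap K (Dm (fun μ => ((p μ : ℂ))) ψ) = Dm (fun ν => ((p' ν : ℂ))) φ := by
    rw [show Dm (fun μ => ((p μ : ℂ))) ψ = ρ from hρ.symm]; exact hNρ
  -- six evaluations via master
  have H1 : (∑ μ, ∑ ν, ∑ i, ∑ j, ∑ k, ∑ l,
      tpmP K p ψ φ e f μ ν i j k l * ((Real.log (p μ) : ℂ)))
      = ∑ μ, ((p μ : ℂ)) * ((Real.log (p μ) : ℂ)) := by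
    have h := master K p ψ φ e f (fun μ => ((Real.log (p μ) : ℂ))) (fun _ => 1)
      (fun _ => 1) (fun _ => 1) (fun _ => 1) (fun _ => 1)
    simp only [one_mul, mul_one] at h
    rw [Dm_one he, Dm_one hf, Dm_one hφ] at h
    rw [h]
    simp only [one_mul, mul_one]
    rw [trace_krausMap K hK, trace_Dm hψ]
  have H2 : (∑ μ, ∑ ν, ∑ i, ∑ j, ∑ k, ∑ l,
      tpmP K p ψ φ e f μ ν i j k l * ((Real.log (p' ν) : ℂ)))
      = ∑ ν, ((p' ν : ℂ)) * ((Real.log (p' ν) : ℂ)) := by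
    have h := master K p ψ φ e f (fun _ => 1) (fun ν => ((Real.log (p' ν) : ℂ)))
      (fun _ => 1) (fun _ => 1) (fun _ => 1) (fun _ => 1)
    simp only [one_mul, mul_one] at h
    rw [Dm_one he, Dm_one hf] at h
    rw [h]
    simp only [one_mul, mul_one]
    rw [hN, Dm_mul_Dm hφ, trace_Dm hφ]
  have H3g : ∀ c : ℂ, (∑ μ, ∑ ν, ∑ i, ∑ j, ∑ k, ∑ l,
      tpmP K p ψ φ e f μ ν i j k l * (c * ((Real.log (r i) : ℂ))))
      = c * (Dm (fun i => ((Real.log (r i) : ℂ))) e * Dm (fun μ => ((p μ : ℂ))) ψ).trace := by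
    intro c
    have h := master K p ψ φ e f (fun _ => 1) (fun _ => 1)
      (fun i => c * ((Real.log (r i) : ℂ))) (fun _ => 1) (fun _ => 1) (fun _ => 1)
    simp only [one_mul, mul_one] at h
    rw [Dm_one he, Dm_one hf, Dm_one hφ,
      Dm_smul c (fun i => ((Real.log (r i) : ℂ))) e] at h
    rw [h]
    simp only [one_mul, mul_one, smul_mul_assoc, krausMap_smul, Matrix.trace_smul,
      smul_eq_mul]
    rw [trace_krausMap K hK]
  have H4g : ∀ c : ℂ, (∑ μ, ∑ ν, ∑ i, ∑ j, ∑ k, ∑ l,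
      tpmP K p ψ φ e f μ ν i j k l * (c * ((Real.log (r j) : ℂ))))
      = c * (Dm (fun i => ((Real.log (r i) : ℂ))) e * Dm (fun μ => ((p μ : ℂ))) ψ).trace := by
    intro c
    have h := master K p ψ φ e f (fun _ => 1) (fun _ => 1) (fun _ => 1)
      (fun j => c * ((Real.log (r j) : ℂ))) (fun _ => 1) (fun _ => 1)
    simp only [one_mul, mul_one] at h
    rw [Dm_one he, Dm_one hf, Dm_one hφ,
      Dm_smul c (fun j => ((Real.log (r j) : ℂ))) e] at h
    rw [h]
    simp only [one_mul, mul_one, mul_smul_comm, krausMap_smul, Matrix.trace_smul,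
      smul_eq_mul]
    rw [trace_krausMap K hK, Matrix.trace_mul_comm]
  have H5g : ∀ c : ℂ, (∑ μ, ∑ ν, ∑ i, ∑ j, ∑ k, ∑ l,
      tpmP K p ψ φ e f μ ν i j k l * (c * ((Real.log (r' k) : ℂ))))
      = c * (Dm (fun k => ((Real.log (r' k) : ℂ))) f * Dm (fun ν => ((p' ν : ℂ))) φ).trace := by
    intro c
    have h := master K p ψ φ e f (fun _ => 1) (fun _ => 1) (fun _ => 1) (fun _ => 1)
      (fun k => c * ((Real.log (r' k) : ℂ))) (fun _ => 1)
    simp only [one_mul, mul_one] at h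
    rw [Dm_one he, Dm_one hf, Dm_one hφ,
      Dm_smul c (fun k => ((Real.log (r' k) : ℂ))) f] at h
    rw [h]
    simp only [one_mul, mul_one, smul_mul_assoc, Matrix.trace_smul, smul_eq_mul]
    rw [hN]
  have H6g : ∀ c : ℂ, (∑ μ, ∑ ν, ∑ i, ∑ j, ∑ k, ∑ l,
      tpmP K p ψ φ e f μ ν i j k l * (c * ((Real.log (r' l) : ℂ))))
      = c * (Dm (fun k => ((Real.log (r' k) : ℂ))) f * Dm (fun ν => ((p' ν : ℂ))) φ).trace := by
    intro c
    have h := master K p ψ φ e f (fun _ => 1) (fun _ => 1) (fun _ => 1) (fun _ => 1)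
      (fun _ => 1) (fun l => c * ((Real.log (r' l) : ℂ)))
    simp only [one_mul, mul_one] at h
    rw [Dm_one he, Dm_one hf, Dm_one hφ,
      Dm_smul c (fun l => ((Real.log (r' l) : ℂ))) f] at h
    rw [h]
    simp only [one_mul, mul_one, mul_smul_comm, Matrix.trace_smul, smul_eq_mul]
    rw [hN, Matrix.trace_mul_comm]
  -- realness of the mixed traces
  have hTγ : (Dm (fun i => ((Real.log (r i) : ℂ))) e * Dm (fun μ => ((p μ : ℂ))) ψ).trace
      = ((∑ i, ∑ μ, Real.log (r i) * p μ * Complex.normSq (star (e i) ⬝ᵥ ψ μ) : ℝ) : ℂ) := by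
    rw [trace_Dm_mul_Dm]
    push_cast
    rfl
  have hTγ' : (Dm (fun k => ((Real.log (r' k) : ℂ))) f * Dm (fun ν => ((p' ν : ℂ))) φ).trace
      = ((∑ k, ∑ ν, Real.log (r' k) * p' ν * Complex.normSq (star (f k) ⬝ᵥ φ ν) : ℝ) : ℂ) := by
    rw [trace_Dm_mul_Dm]
    push_cast
    rfl
  have hSp : (∑ μ, ((p μ : ℂ)) * ((Real.log (p μ) : ℂ)))
      = ((∑ μ, p μ * Real.log (p μ) : ℝ) : ℂ) := by push_cast; rfl
  have hSp' : (∑ ν, ((p' ν : ℂ)) * ((Real.log (p' ν) : ℂ)))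
      = ((∑ ν, p' ν * Real.log (p' ν) : ℝ) : ℂ) := by push_cast; rfl
  -- the relative-entropy traces
  have R1 : (ρ * (projLog p ψ - projLog r e)).trace
      = (∑ μ, ((p μ : ℂ)) * ((Real.log (p μ) : ℂ)))
        - (Dm (fun i => ((Real.log (r i) : ℂ))) e * Dm (fun μ => ((p μ : ℂ))) ψ).trace := by
    rw [show ρ = Dm (fun μ => ((p μ : ℂ))) ψ from hρ,
      show projLog p ψ = Dm (fun μ => ((Real.log (p μ) : ℂ))) ψ from rfl,
      show projLog r e = Dm (fun i => ((Real.log (r i) : ℂ))) e from rfl,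
      mul_sub, Matrix.trace_sub, Dm_mul_Dm hψ, trace_Dm hψ, Matrix.trace_mul_comm]
  have R2 : ((krausMap K ρ) * (projLog p' φ - projLog r' f)).trace
      = (∑ ν, ((p' ν : ℂ)) * ((Real.log (p' ν) : ℂ)))
        - (Dm (fun k => ((Real.log (r' k) : ℂ))) f * Dm (fun ν => ((p' ν : ℂ))) φ).trace := by
    rw [show ρ = Dm (fun μ => ((p μ : ℂ))) ψ from hρ, hN,
      show projLog p' φ = Dm (fun ν => ((Real.log (p' ν) : ℂ))) φ from rfl,
      show projLog r' f = Dm (fun k => ((Real.log (r' k) : ℂ))) f from rfl,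
      mul_sub, Matrix.trace_sub, Dm_mul_Dm hφ, trace_Dm hφ, Matrix.trace_mul_comm]
  constructor
  · have hsplit : ∀ μ ν i j k l,
        tpmP K p ψ φ e f μ ν i j k l * entProdFwd p p' r r' μ ν i j k l
        = tpmP K p ψ φ e f μ ν i j k l * ((Real.log (p μ) : ℂ))
          - tpmP K p ψ φ e f μ ν i j k l * ((Real.log (p' ν) : ℂ))
          - tpmP K p ψ φ e f μ ν i j k l * (((1 + Complex.I)/2) * ((Real.log (r i) : ℂ)))
          - tpmP K p ψ φ e f μ ν i j k l * (((1 - Complex.I)/2) * ((Real.log (r j) : ℂ)))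
          + tpmP K p ψ φ e f μ ν i j k l * (((1 + Complex.I)/2) * ((Real.log (r' k) : ℂ)))
          + tpmP K p ψ φ e f μ ν i j k l * (((1 - Complex.I)/2) * ((Real.log (r' l) : ℂ))) := by
      intro μ ν i j k l
      rw [entProdFwd,
        Real.log_div (mul_pos (hr i) (hr j)).ne' (mul_pos (hr' k) (hr' l)).ne',
        Real.log_mul (hr i).ne' (hr j).ne', Real.log_mul (hr' k).ne' (hr' l).ne',
        Real.log_div (hr i).ne' (hr j).ne', Real.log_div (hr' k).ne' (hr' l).ne']
      push_cast
      ring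
    simp only [hsplit]
    simp only [Finset.sum_add_distrib, Finset.sum_sub_distrib]
    rw [H1, H2, H3g ((1 + Complex.I)/2), H4g ((1 - Complex.I)/2), H5g ((1 + Complex.I)/2),
      H6g ((1 - Complex.I)/2), R1, R2, hSp, hSp', hTγ, hTγ']
    simp only [Complex.sub_re, Complex.ofReal_re]
    push_cast
    ring
  · have hsplit2 : ∀ μ ν i j k l,
        tpmP K p ψ φ e f μ ν i j k l *
          (((-(1/2) * (Real.log (r i / r j) - Real.log (r' k / r' l)) : ℝ)) : ℂ)
        = tpmP K p ψ φ e f μ ν i j k l * ((-(1/2) : ℂ) * ((Real.log (r i) : ℂ)))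
          + tpmP K p ψ φ e f μ ν i j k l * (((1/2) : ℂ) * ((Real.log (r j) : ℂ)))
          + tpmP K p ψ φ e f μ ν i j k l * (((1/2) : ℂ) * ((Real.log (r' k) : ℂ)))
          + tpmP K p ψ φ e f μ ν i j k l * ((-(1/2) : ℂ) * ((Real.log (r' l) : ℂ))) := by
      intro μ ν i j k l
      rw [Real.log_div (hr i).ne' (hr j).ne', Real.log_div (hr' k).ne' (hr' l).ne']
      push_cast
      ring
    simp only [hsplit2]
    simp only [Finset.sum_add_distrib]
    rw [H3g (-(1/2)), H4g ((1/2)), H5g ((1/2)), H6g (-(1/2))]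
    ring
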